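/- There is no Borel Hamel basis for ℝ as a vector space over ℚ; more generally, any analytic ℚ-linearly independent spanning subset of ℝ must be countable, which is impossible, so ℝ has no analytic Hamel basis over ℚ. -/

import Mathlib

open MeasureTheory Set Filter Topology Pointwise

/-- An analytic set intersected with an open set is analytic. -/
lemma aux_analyticSet_inter_isOpen {α : Type*} [TopologicalSpace α] {s u : Set α}
    (hs : AnalyticSet s) (hu : IsOpen u) : AnalyticSet (s ∩ u) := by
  rcases analyticSet_iff_exists_polishSpace_range.1 hs with ⟨β, tβ, pβ, f, hf, rfl⟩
  rw [← Set.image_preimage_eq_range_inter]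
  exact (hu.preimage hf).analyticSet_image hf

/-- The ℚ-span of an analytic subset of ℝ is analytic. -/
lemma aux_analyticSet_span {s : Set ℝ} (hs : AnalyticSet s) :
    AnalyticSet ((Submodule.span ℚ s : Submodule ℚ ℝ) : Set ℝ) := by
  classical
  rcases analyticSet_iff_exists_polishSpace_range.1 hs with ⟨β, tβ, pβ, f, hf, rfl⟩
  have key : ((Submodule.span ℚ (Set.range f) : Submodule ℚ ℝ) : Set ℝ)
      = ⋃ (n : ℕ), ⋃ (q : Fin n → ℚ),
        Set.range (fun x : Fin n → β => ∑ i, (q i : ℚ) • f (x i)) := by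
    ext y
    simp only [Set.mem_iUnion, SetLike.mem_coe, Submodule.mem_span_set', Set.mem_range]
    constructor
    · rintro ⟨n, c, g, rfl⟩
      have h : ∀ i, ∃ x : β, f x = (g i : ℝ) := fun i => (g i).2
      choose x hx using h
      exact ⟨n, c, x, by simp only [hx]⟩
    · rintro ⟨n, q, x, rfl⟩
      exact ⟨n, q, fun i => ⟨f (x i), Set.mem_range_self _⟩, rfl⟩
  rw [key]
  refine AnalyticSet.iUnion fun n => AnalyticSet.iUnion fun q => ?_
  exact analyticSet_range_of_polishSpace
    (continuous_finset_sum _ fun i _ => ((hf.comp (continuous_apply (A := fun _ : Fin n => β) i)).const_smul (q i) :))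

/-- Capacitability for Lebesgue measure: an analytic subset of ℝ with positive outer
measure contains a compact set of positive measure. -/
lemma aux_exists_isCompact_subset {s : Set ℝ} (hs : AnalyticSet s)
    (hpos : 0 < volume s) : ∃ K, K ⊆ s ∧ IsCompact K ∧ 0 < volume K := by
  classical
  rcases analyticSet_iff_exists_polishSpace_range.1 hs with ⟨β, tβ, pβ, f, hf, rfl⟩
  have hne : (Set.range f).Nonempty := by
    rcases Set.eq_empty_or_nonempty (Set.range f) with h | h
    · rw [h] at hpos; simp at hpos
    · exact h
  have hβ : Nonempty β := by rcases hne with ⟨y, x, _⟩; exact ⟨x⟩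
  obtain ⟨g, gcont, gsurj⟩ := PolishSpace.exists_nat_nat_continuous_surjective β
  set F : (ℕ → ℕ) → ℝ := f ∘ g with hF
  have Fcont : Continuous F := hf.comp gcont
  have hrange : Set.range F = Set.range f := gsurj.range_comp f
  rw [← hrange] at hpos
  -- find a bounded window of positive outer measure
  obtain ⟨R, hR⟩ : ∃ R : ℕ, 0 < volume (Set.range F ∩ Set.Ioo (-(R:ℝ)) R) := by
    by_contra h
    push_neg at h
    have h0 : ∀ R : ℕ, volume (Set.range F ∩ Set.Ioo (-(R:ℝ)) R) = 0 :=
      fun R => le_antisymm (h R) zero_le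
    have hsub : Set.range F ⊆ ⋃ R : ℕ, Set.range F ∩ Set.Ioo (-(R:ℝ)) R := by
      intro y hy
      obtain ⟨R, hR⟩ := exists_nat_gt |y|
      refine Set.mem_iUnion.2 ⟨R, hy, ?_⟩
      rw [Set.mem_Ioo, ← abs_lt]
      exact hR
    have := (measure_mono (μ := volume) hsub).trans (measure_iUnion_le _)
    simp only [h0, tsum_zero, nonpos_iff_eq_zero] at this
    exact hpos.ne' this
  set G : Set (ℕ → ℕ) := F ⁻¹' (Set.Ioo (-(R:ℝ)) R) with hG
  set A : Set ℝ := F '' G with hA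
  have hGopen : IsOpen G := isOpen_Ioo.preimage Fcont
  have hAeq : A = Set.range F ∩ Set.Ioo (-(R:ℝ)) R := Set.image_preimage_eq_range_inter
  have hApos : 0 < volume A := by rw [hAeq]; exact hR
  have hAsubI : A ⊆ Set.Ioo (-(R:ℝ)) R := by rw [hAeq]; exact Set.inter_subset_right
  have hAfin : volume A ≠ ⊤ := by
    refine ne_of_lt (lt_of_le_of_lt (measure_mono hAsubI) ?_)
    rw [Real.volume_Ioo]
    exact ENNReal.ofReal_lt_top
  set c : ENNReal := volume A / 2 with hc
  have hc0 : 0 < c := ENNReal.half_pos hApos.ne'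
  have hcA : c < volume A := ENNReal.half_lt_self hApos.ne' hAfin
  -- the Suslin scheme sets
  set Q : (ℕ → ℕ) → ℕ → Set (ℕ → ℕ) :=
    fun σ k => G ∩ {x | ∀ i, i < k → x i ≤ σ i} with hQdef
  have step : ∀ (σ : ℕ → ℕ) (k : ℕ), ∃ σ' : ℕ → ℕ, (∀ i, i < k → σ' i = σ i) ∧
      (c < volume (F '' Q σ k) → c < volume (F '' Q σ' (k + 1))) := by
    intro σ k
    by_cases hk : c < volume (F '' Q σ k)
    · have hmono : Monotone (fun m : ℕ => F '' (Q σ k ∩ {x | x k ≤ m})) := by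
        intro m m' hmm'
        exact Set.image_mono
          (Set.inter_subset_inter_right _ fun x hx => le_trans hx hmm')
      have hun0 : (⋃ m : ℕ, (Q σ k ∩ {x | x k ≤ m})) = Q σ k := by
        ext x
        constructor
        · intro hx
          rcases Set.mem_iUnion.1 hx with ⟨m, hm, _⟩
          exact hm
        · intro h
          exact Set.mem_iUnion.2 ⟨x k, h, show x k ≤ x k from le_rfl⟩
      have hun : (⋃ m : ℕ, F '' (Q σ k ∩ {x | x k ≤ m})) = F '' Q σ k := by
        rw [← Set.image_iUnion, hun0]
      have hsup := hmono.measure_iUnion (μ := volume)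
      rw [hun] at hsup
      rw [hsup] at hk
      obtain ⟨m, hm⟩ := lt_iSup_iff.1 hk
      refine ⟨Function.update σ k m, fun i hi => Function.update_of_ne hi.ne _ _, fun _ => ?_⟩
      have hQeq : Q (Function.update σ k m) (k + 1) = Q σ k ∩ {x | x k ≤ m} := by
        ext x
        simp only [hQdef, Set.mem_inter_iff, Set.mem_setOf_eq, and_assoc]
        constructor
        · rintro ⟨hxG, hx⟩
          refine ⟨hxG, fun i hi => ?_, ?_⟩
          · have := hx i (hi.trans (Nat.lt_succ_self k))
            rwa [Function.update_of_ne hi.ne] at this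
          · have := hx k (Nat.lt_succ_self k)
            rwa [Function.update_self] at this
        · rintro ⟨hxG, hx, hxk⟩
          refine ⟨hxG, fun i hi => ?_⟩
          rcases Nat.lt_succ_iff_lt_or_eq.1 hi with hlt | rfl
          · rw [Function.update_of_ne hlt.ne]
            exact hx i hlt
          · rwa [Function.update_self]
      rw [hQeq]
      exact hm
    · exact ⟨σ, fun _ _ => rfl, fun h => absurd h hk⟩
  choose next hnext1 hnext2 using step
  set τ : ℕ → ℕ → ℕ :=
    fun k => Nat.rec (motive := fun _ => ℕ → ℕ) (fun _ => 0) (fun k σ => next σ k) k with hτ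
  have hτsucc : ∀ k, τ (k + 1) = next (τ k) k := fun k => rfl
  have hτmeas : ∀ k, c < volume (F '' Q (τ k) k) := by
    intro k
    induction k with
    | zero =>
      have : Q (τ 0) 0 = G := by
        ext x; simp [hQdef]
      rw [this]
      exact hcA
    | succ k ih =>
      rw [hτsucc]
      exact hnext2 _ _ ih
  set σf : ℕ → ℕ := fun i => τ (i + 1) i with hσf
  have stab : ∀ k i, i < k → τ k i = σf i := by
    intro k
    induction k with
    | zero => intro i hi; exact absurd hi (Nat.not_lt_zero i)
    | succ k ih =>
      intro i hi
      rcases Nat.lt_succ_iff_lt_or_eq.1 hi with hlt | rfl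
      · rw [hτsucc, hnext1 (τ k) k i hlt]
        exact ih i hlt
      · rfl
  have hQσf : ∀ k, Q σf k = Q (τ k) k := by
    intro k
    ext x
    simp only [hQdef, Set.mem_inter_iff, Set.mem_setOf_eq]
    constructor
    · rintro ⟨hxG, hx⟩
      exact ⟨hxG, fun i hi => by rw [stab k i hi]; exact hx i hi⟩
    · rintro ⟨hxG, hx⟩
      exact ⟨hxG, fun i hi => by rw [← stab k i hi]; exact hx i hi⟩
  have hQc : ∀ k, c < volume (F '' Q σf k) := fun k => by rw [hQσf]; exact hτmeas k
  set D : ℕ → Set ℝ := fun k => closure (F '' Q σf k) with hD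
  have hQG : ∀ k, Q σf k ⊆ G := fun k => Set.inter_subset_left
  have hDsub : ∀ k, D k ⊆ Set.Icc (-(R:ℝ)) R := by
    intro k
    refine closure_minimal ?_ isClosed_Icc
    exact fun y hy => Set.Ioo_subset_Icc_self (hAsubI (Set.image_mono (f := F) (hQG k) hy))
  have hDanti : Antitone D := by
    intro k l hkl
    refine closure_mono (Set.image_mono (f := F) ?_)
    exact Set.inter_subset_inter_right _ fun x hx i hi => hx i (hi.trans_le hkl)
  set K : Set ℝ := ⋂ k, D k with hK
  have hKclosed : IsClosed K := isClosed_iInter fun k => isClosed_closure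
  have hKcomp : IsCompact K :=
    isCompact_Icc.of_isClosed_subset hKclosed ((Set.iInter_subset D 0).trans (hDsub 0))
  have hKvol : volume K = ⨅ k, volume (D k) := by
    refine Directed.measure_iInter
      (fun k => isClosed_closure.measurableSet.nullMeasurableSet)
      (hDanti.directed_ge) ⟨0, ?_⟩
    refine ne_of_lt (lt_of_le_of_lt (measure_mono (hDsub 0)) ?_)
    rw [Real.volume_Icc]
    exact ENNReal.ofReal_lt_top
  have hKpos : 0 < volume K := by
    rw [hKvol]
    refine lt_of_lt_of_le hc0 (le_iInf fun k => ?_)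
    exact (hQc k).le.trans (measure_mono subset_closure)
  refine ⟨K, ?_, hKcomp, hKpos⟩
  -- K ⊆ range f
  rw [← hrange]
  intro y hy
  have hyc : ∀ k : ℕ, ∃ x, x ∈ Q σf k ∧ dist y (F x) < 1 / (k + 1) := by
    intro k
    have h1 : y ∈ closure (F '' Q σf k) := Set.mem_iInter.1 hy k
    rcases Metric.mem_closure_iff.1 h1 (1 / (k + 1)) (by positivity) with ⟨b, ⟨x, hx, rfl⟩, hb⟩
    exact ⟨x, hx, hb⟩
  choose x hx hdist using hyc
  set x' : ℕ → ℕ → ℕ := fun k i => min (x k i) (σf i) with hx'def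
  have hcompQ : IsCompact {z : ℕ → ℕ | ∀ i, z i ≤ σf i} := by
    have heq : {z : ℕ → ℕ | ∀ i, z i ≤ σf i} = Set.pi Set.univ fun i => Set.Iic (σf i) := by
      ext z; simp [Set.mem_pi, Pi.le_def]
    rw [heq]
    exact isCompact_univ_pi fun i => (Set.finite_Iic _).isCompact
  have hx'mem : ∀ k, x' k ∈ {z : ℕ → ℕ | ∀ i, z i ≤ σf i} := fun k i => min_le_right _ _
  obtain ⟨a, _, φ, hφ, hconv⟩ := hcompQ.tendsto_subseq hx'mem
  have hxconv : Tendsto (fun k => x (φ k)) atTop (𝓝 a) := by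
    rw [tendsto_pi_nhds] at hconv ⊢
    intro i
    have h1 := hconv i
    rw [nhds_discrete, tendsto_pure] at h1 ⊢
    have h2 : ∀ᶠ k in atTop, i < φ k :=
      eventually_atTop.2 ⟨i + 1, fun k hk => lt_of_lt_of_le (Nat.lt_succ_self i)
        (hk.trans hφ.le_apply)⟩
    filter_upwards [h1, h2] with k hk1 hk2
    have hle : x (φ k) i ≤ σf i := (hx (φ k)).2 i hk2
    rw [← hk1]
    simp only [hx'def, Function.comp_apply]
    exact (min_eq_left hle).symm
  have hFconv : Tendsto (fun k => F (x (φ k))) atTop (𝓝 (F a)) :=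
    (Fcont.tendsto a).comp hxconv
  have hFy : Tendsto (fun k => F (x k)) atTop (𝓝 y) := by
    rw [tendsto_iff_dist_tendsto_zero]
    refine squeeze_zero (fun k => dist_nonneg) (fun k => ?_) tendsto_one_div_add_atTop_nhds_zero_nat
    rw [dist_comm]
    exact (hdist k).le
  have hya : y = F a :=
    tendsto_nhds_unique (hFy.comp hφ.tendsto_atTop) hFconv
  rw [hya]
  exact Set.mem_range_self a

theorem stmt_3 :
    ¬ ∃ B : Set ℝ, MeasureTheory.AnalyticSet B ∧
      LinearIndependent ℚ ((↑) : B → ℝ) ∧ Submodule.span ℚ B = ⊤ := by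
  rintro ⟨B, hBan, hBli, hBsp⟩
  have hBne : B.Nonempty := by
    rcases Set.eq_empty_or_nonempty B with h | h
    · rw [h, Submodule.span_empty] at hBsp
      exact absurd hBsp bot_ne_top
    · exact h
  obtain ⟨b₀, hb₀⟩ := hBne
  set B' : Set ℝ := B \ {b₀} with hB'
  have hB'an : AnalyticSet B' := by
    rw [hB', Set.diff_eq]
    exact aux_analyticSet_inter_isOpen hBan isClosed_singleton.isOpen_compl
  set p : Submodule ℚ ℝ := Submodule.span ℚ B' with hp
  have hb₀p : b₀ ∉ p := by
    have h1 : (⟨b₀, hb₀⟩ : B) ∉ {y : B | (y : ℝ) ≠ b₀} := by simp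
    have h2 := hBli.notMem_span_image h1
    have h3 : (Subtype.val '' {y : B | (y : ℝ) ≠ b₀}) = B' := by
      ext z
      constructor
      · rintro ⟨⟨w, hw⟩, hne, rfl⟩
        exact ⟨hw, hne⟩
      · rintro ⟨hz, hne⟩
        exact ⟨⟨z, hz⟩, hne, rfl⟩
    rw [h3] at h2
    exact h2
  have hZan : AnalyticSet (p : Set ℝ) := aux_analyticSet_span hB'an
  have hcov : (Set.univ : Set ℝ) ⊆ ⋃ q : ℚ, (fun z => (q : ℝ) • b₀ + z) '' (p : Set ℝ) := by
    intro w _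
    have hw : w ∈ Submodule.span ℚ B := by rw [hBsp]; trivial
    have hBeq : B = insert b₀ B' := by
      rw [hB', Set.insert_diff_singleton, Set.insert_eq_self.2 hb₀]
    rw [hBeq, Submodule.span_insert] at hw
    rcases Submodule.mem_sup.1 hw with ⟨y, hy, z, hz, rfl⟩
    rcases Submodule.mem_span_singleton.1 hy with ⟨q, rfl⟩
    refine Set.mem_iUnion.2 ⟨q, z, hz, ?_⟩
    simp [Rat.smul_def]
  obtain ⟨q, hq⟩ : ∃ q : ℚ, 0 < volume ((fun z => (q : ℝ) • b₀ + z) '' (p : Set ℝ)) := by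
    by_contra h
    push_neg at h
    have h0 : ∀ q : ℚ, volume ((fun z => (q : ℝ) • b₀ + z) '' (p : Set ℝ)) = 0 :=
      fun q => le_antisymm (h q) zero_le
    have := (measure_mono (μ := volume) hcov).trans (measure_iUnion_le _)
    simp only [h0, tsum_zero, nonpos_iff_eq_zero, Real.volume_univ] at this
    exact ENNReal.top_ne_zero this
  have han : AnalyticSet ((fun z => (q : ℝ) • b₀ + z) '' (p : Set ℝ)) :=
    hZan.image_of_continuous (continuous_const.add continuous_id)
  obtain ⟨K, hKsub, hKcomp, hKpos⟩ := aux_exists_isCompact_subset han hq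
  have hsub : K - K ⊆ (p : Set ℝ) := by
    rintro w hw
    rcases Set.mem_sub.1 hw with ⟨u, hu, v, hv, rfl⟩
    rcases hKsub hu with ⟨zu, hzu, rfl⟩
    rcases hKsub hv with ⟨zv, hzv, rfl⟩
    have heq : ((q : ℝ) • b₀ + zu) - ((q : ℝ) • b₀ + zv) = zu - zv := by ring
    rw [heq]
    exact sub_mem hzu hzv
  have hnhds : (p : Set ℝ) ∈ 𝓝 (0 : ℝ) :=
    Filter.mem_of_superset
      (MeasureTheory.Measure.sub_mem_nhds_zero_of_addHaar_pos volume K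
        hKcomp.measurableSet hKpos) hsub
  rcases Metric.mem_nhds_iff.1 hnhds with ⟨ε, hε, hball⟩
  apply hb₀p
  obtain ⟨n, hn⟩ := exists_nat_gt (|b₀| / ε)
  have hn0 : (0 : ℝ) < n + 1 := by positivity
  have hmem : b₀ / (n + 1) ∈ Metric.ball (0 : ℝ) ε := by
    rw [Metric.mem_ball, dist_zero_right, Real.norm_eq_abs, abs_div]
    rw [abs_of_pos hn0, div_lt_iff₀ hn0]
    have h1 : |b₀| < ε * n := by
      rwa [div_lt_iff₀ hε, mul_comm] at hn
    nlinarith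
  have hkey : b₀ = ((n + 1 : ℚ)) • (b₀ / (n + 1)) := by
    rw [Rat.smul_def]
    push_cast
    field_simp
  rw [hkey]
  exact Submodule.smul_mem _ _ (hball hmem)
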